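/- Let x be a sequence of length m with distinct elements, i ∈ {1,...,m-1} with x[i] < x[i+1], and y = τ(x,i). Then SN_y[i] ∈ {0,...,SN_x[i]}, SN_y[i+1] = SN_x[i] - SN_y[i] + 1, and if ref_x(i+1) is defined then SN_y[ref_x(i+1)] = SN_x[ref_x(i+1)] - 1. -/

import Mathlib

/-- Binary tree shapes (Cartesian trees are determined by their shape). -/
inductive BTree : Type
  | nil : BTree
  | node : BTree → BTree → BTree
deriving DecidableEq

namespace BTree

/-- Number of nodes. -/
def size : BTree → ℕ
  | nil => 0
  | node l r => size l + size r + 1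

/-- Length of the leftmost path. -/
def LMP : BTree → ℕ
  | nil => 0
  | node l _ => LMP l + 1

/-- Length of the rightmost path. -/
def RMP : BTree → ℕ
  | nil => 0
  | node _ r => RMP r + 1

end BTree

/-- Minimum value of a list (0 for the empty list). -/
def listMin : List ℤ → ℤ
  | [] => 0
  | a :: t => t.foldl min a

/-- Index (0-based) of the minimum of a list. -/
def minIdx (l : List ℤ) : ℕ := l.idxOf (listMin l)

/-- Cartesian tree of a list, with fuel for termination. -/
def ctreeAux : ℕ → List ℤ → BTree
  | 0, _ => .nil
  | _ + 1, [] => .nil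
  | n + 1, a :: t =>
      let g := minIdx (a :: t)
      .node (ctreeAux n ((a :: t).take g)) (ctreeAux n ((a :: t).drop (g + 1)))

/-- Cartesian tree of a list: the root is the position of the minimum,
its subtrees are the Cartesian trees of the prefix and suffix around it. -/
def ctreeL (l : List ℤ) : BTree := ctreeAux l.length l

/-- The factor x[a..b] (1-based positions) of a sequence, as a list. -/
def seqList (x : ℕ → ℤ) (a b : ℕ) : List ℤ :=
  (List.range (b + 1 - a)).map (fun k => x (a + k))

/-- Cartesian tree of the sequence x[1..m]. -/
def ctreeOf (m : ℕ) (x : ℕ → ℤ) : BTree := ctreeL (seqList x 1 m)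

/-- Positions j < h (1-based) with x[j] < x[h]. -/
def PDset (x : ℕ → ℤ) (h : ℕ) : Finset ℕ :=
  (Finset.Ico 1 h).filter (fun j => x j < x h)

/-- Parent-distance table: PD_x[h] = h - max{j < h : x[j] < x[h]}, 0 if no such j. -/
def PD (x : ℕ → ℤ) (h : ℕ) : ℕ :=
  if hs : (PDset x h).Nonempty then h - (PDset x h).max' hs else 0

/-- Positions h < j ≤ m with x[j] < x[h]. -/
def RPDset (m : ℕ) (x : ℕ → ℤ) (h : ℕ) : Finset ℕ :=
  (Finset.Ioc h m).filter (fun j => x j < x h)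

/-- Reverse parent-distance table: RPD_x[h] = min{j > h : x[j] < x[h]} - h, 0 if no such j. -/
def RPD (m : ℕ) (x : ℕ → ℤ) (h : ℕ) : ℕ :=
  if hs : (RPDset m x h).Nonempty then (RPDset m x h).min' hs - h else 0

/-- Referent of h: the smallest position j > h with x[j] < x[h], or -1 if none. -/
def refD (m : ℕ) (x : ℕ → ℤ) (h : ℕ) : ℤ :=
  if hs : (RPDset m x h).Nonempty then ((RPDset m x h).min' hs : ℤ) else -1

/-- Skipped-number table: SN_x[h] is the number of nodes on the rightmost path of the
left subtree of node h in C(x), i.e. the number of positions whose referent is h. -/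
def SN (m : ℕ) (x : ℕ → ℤ) (h : ℕ) : ℕ :=
  ((Finset.Ico 1 h).filter (fun j => refD m x j = (h : ℤ))).card

/-- The swap τ(x,i): exchange the entries at positions i and i+1. -/
def swapAt (x : ℕ → ℤ) (i : ℕ) : ℕ → ℤ :=
  fun j => if j = i then x (i + 1) else if j = i + 1 then x i else x j

/-- ng(T,i): the Cartesian trees obtained from a sequence realizing T by one swap
at position i (valid positions are 1 ≤ i ≤ m-1). -/
def ngi (m : ℕ) (T : BTree) (i : ℕ) : Set BTree :=
  { S | 1 ≤ i ∧ i + 1 ≤ m ∧ ∃ x : ℕ → ℤ, Set.InjOn x (Set.Icc 1 m) ∧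
        ctreeOf m x = T ∧ S = ctreeOf m (swapAt x i) }

/-- ng(T): the swap neighbourhood of T. -/
def ng (m : ℕ) (T : BTree) : Set BTree := ⋃ i, ngi m T i

/-- Number of permutations of {1,...,n} whose Cartesian tree is A. -/
noncomputable def permCount (n : ℕ) (A : BTree) : ℕ :=
  Set.ncard { σ : Equiv.Perm (Fin n) |
    ctreeL (List.ofFn (fun k : Fin n => ((σ k : ℕ) : ℤ) + 1)) = A }

/-- Product over all nodes t of A of the size of the subtree rooted at t. -/
def hookProd : BTree → ℕ
  | .nil => 1
  | .node l r => (BTree.node l r).size * hookProd l * hookProd r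


lemma mem_RPDset' {m j k : ℕ} {x : ℕ → ℤ} :
    k ∈ RPDset m x j ↔ j < k ∧ k ≤ m ∧ x k < x j := by
  simp [RPDset, Finset.mem_filter, Finset.mem_Ioc, and_assoc]

lemma refD_eq_coe {m j k : ℕ} {x : ℕ → ℤ} :
    refD m x j = (k : ℤ) ↔ k ∈ RPDset m x j ∧ ∀ l ∈ RPDset m x j, k ≤ l := by
  unfold refD
  split_ifs with hs
  · rw [show ((((RPDset m x j).min' hs : ℕ)) : ℤ) = (k : ℤ) ↔ (RPDset m x j).min' hs = k
      from Nat.cast_inj]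
    constructor
    · rintro rfl
      exact ⟨Finset.min'_mem _ _, fun l hl => Finset.min'_le _ _ hl⟩
    · rintro ⟨hk, hmin⟩
      exact le_antisymm (Finset.min'_le _ _ hk) (Finset.le_min' _ _ _ hmin)
  · constructor
    · intro h; exact h.elim
    · rintro ⟨hk, -⟩; exact absurd ⟨k, hk⟩ hs

lemma swapAt_ne {x : ℕ → ℤ} {i j : ℕ} (h1 : j ≠ i) (h2 : j ≠ i + 1) :
    swapAt x i j = x j := by simp [swapAt, h1, h2]

lemma swapAt_self {x : ℕ → ℤ} {i : ℕ} : swapAt x i i = x (i + 1) := by simp [swapAt]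

lemma swapAt_succ {x : ℕ → ℤ} {i : ℕ} : swapAt x i (i + 1) = x i := by
  simp [swapAt, if_neg (show i + 1 ≠ i by omega)]

section Swap

variable {m i : ℕ} {x : ℕ → ℤ}

/-- refD unchanged for positions after the swap. -/
lemma refD_swap_gt {j : ℕ} (hj : i + 1 < j) :
    refD m (swapAt x i) j = refD m x j := by
  unfold refD
  have hset : RPDset m (swapAt x i) j = RPDset m x j := by
    unfold RPDset
    apply Finset.filter_congr
    intro k hk
    rw [Finset.mem_Ioc] at hk
    rw [swapAt_ne (show k ≠ i by omega) (show k ≠ i + 1 by omega),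
      swapAt_ne (show j ≠ i by omega) (show j ≠ i + 1 by omega)]
  rw [hset]

/-- After the swap, the referent of position i is i+1. -/
lemma refD_swap_at (him : i + 1 ≤ m) (hlt : x i < x (i + 1)) :
    refD m (swapAt x i) i = ((i + 1 : ℕ) : ℤ) := by
  rw [refD_eq_coe]
  refine ⟨mem_RPDset'.2 ⟨by omega, him, ?_⟩, fun l hl => ?_⟩
  · rw [swapAt_succ, swapAt_self]; exact hlt
  · rw [mem_RPDset'] at hl; omega

/-- For positions before i, refD = r is preserved when r > i+1. -/
lemma refD_swap_small {j r : ℕ} (hj : j < i) (hr : i + 1 < r)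
    (him : i + 1 ≤ m) (hlt : x i < x (i + 1)) :
    refD m (swapAt x i) j = (r : ℤ) ↔ refD m x j = (r : ℤ) := by
  rw [refD_eq_coe, refD_eq_coe]
  have hyj : swapAt x i j = x j := swapAt_ne (by omega) (by omega)
  have hyr : swapAt x i r = x r := swapAt_ne (by omega) (by omega)
  constructor
  · rintro ⟨hmem, hmin⟩
    rw [mem_RPDset'] at hmem
    rw [hyr, hyj] at hmem
    refine ⟨mem_RPDset'.2 hmem, fun l hl => ?_⟩
    rw [mem_RPDset'] at hl
    by_contra hcon
    push_neg at hcon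
    rcases eq_or_ne l i with hli | hli
    · rw [hli] at hl
      have h1 : i + 1 ∈ RPDset m (swapAt x i) j := mem_RPDset'.2
        ⟨by omega, him, by rw [swapAt_succ, hyj]; exact hl.2.2⟩
      have := hmin _ h1; omega
    rcases eq_or_ne l (i + 1) with hli1 | hli1
    · rw [hli1] at hl
      have h1 : i + 1 ∈ RPDset m (swapAt x i) j := mem_RPDset'.2
        ⟨by omega, him, by rw [swapAt_succ, hyj]; exact lt_trans hlt hl.2.2⟩
      have := hmin _ h1; omega
    · have h1 : l ∈ RPDset m (swapAt x i) j := mem_RPDset'.2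
        ⟨hl.1, hl.2.1, by rw [swapAt_ne hli hli1, hyj]; exact hl.2.2⟩
      have := hmin _ h1; omega
  · rintro ⟨hmem, hmin⟩
    rw [mem_RPDset'] at hmem
    refine ⟨mem_RPDset'.2 ⟨hmem.1, hmem.2.1, by rw [hyr, hyj]; exact hmem.2.2⟩,
      fun l hl => ?_⟩
    rw [mem_RPDset'] at hl
    by_contra hcon
    push_neg at hcon
    rcases eq_or_ne l i with hli | hli
    · have h2 := hl.2.2
      rw [hli, swapAt_self, hyj] at h2
      have h1 : i ∈ RPDset m x j := mem_RPDset'.2 ⟨by omega, by omega, lt_trans hlt h2⟩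
      have := hmin _ h1; omega
    rcases eq_or_ne l (i + 1) with hli1 | hli1
    · have h2 := hl.2.2
      rw [hli1, swapAt_succ, hyj] at h2
      have h1 : i ∈ RPDset m x j := mem_RPDset'.2 ⟨by omega, by omega, h2⟩
      have := hmin _ h1; omega
    · have h2 := hl.2.2
      rw [swapAt_ne hli hli1, hyj] at h2
      have h1 : l ∈ RPDset m x j := mem_RPDset'.2 ⟨hl.1, hl.2.1, h2⟩
      have := hmin _ h1; omega

/-- B1: for j < i, refD_y j = i iff refD_x j = i and x(i+1) < x j. -/
lemma refD_swap_eq_i {j : ℕ} (hj : j < i) (hj1 : 1 ≤ j)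
    (him : i + 1 ≤ m) (hlt : x i < x (i + 1)) (hne : x j ≠ x (i + 1)) :
    refD m (swapAt x i) j = (i : ℤ) ↔ (refD m x j = (i : ℤ) ∧ x (i + 1) < x j) := by
  rw [refD_eq_coe, refD_eq_coe]
  have hyj : swapAt x i j = x j := swapAt_ne (by omega) (by omega)
  constructor
  · rintro ⟨hmem, hmin⟩
    rw [mem_RPDset'] at hmem
    have hxij : x (i + 1) < x j := by
      have := hmem.2.2; rwa [swapAt_self, hyj] at this
    refine ⟨⟨mem_RPDset'.2 ⟨hj, by omega, lt_trans hlt hxij⟩, fun l hl => ?_⟩, hxij⟩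
    rw [mem_RPDset'] at hl
    by_contra hcon
    push_neg at hcon
    have h1 : l ∈ RPDset m (swapAt x i) j := mem_RPDset'.2
      ⟨hl.1, hl.2.1, by rw [swapAt_ne (by omega) (by omega), hyj]; exact hl.2.2⟩
    have := hmin _ h1; omega
  · rintro ⟨⟨hmem, hmin⟩, hxij⟩
    refine ⟨mem_RPDset'.2 ⟨hj, by omega, by rw [swapAt_self, hyj]; exact hxij⟩,
      fun l hl => ?_⟩
    rw [mem_RPDset'] at hl
    by_contra hcon
    push_neg at hcon
    have h1 : l ∈ RPDset m x j := mem_RPDset'.2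
      ⟨hl.1, hl.2.1, by
        have := hl.2.2
        rwa [swapAt_ne (by omega) (by omega), hyj] at this⟩
    have := hmin _ h1; omega

/-- B2: for j < i, refD_y j = i+1 iff refD_x j = i and x j < x(i+1). -/
lemma refD_swap_eq_succ {j : ℕ} (hj : j < i) (hj1 : 1 ≤ j)
    (him : i + 1 ≤ m) (hlt : x i < x (i + 1)) (hne : x j ≠ x (i + 1)) :
    refD m (swapAt x i) j = ((i + 1 : ℕ) : ℤ) ↔
      (refD m x j = (i : ℤ) ∧ x j < x (i + 1)) := by
  rw [refD_eq_coe, refD_eq_coe]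
  have hyj : swapAt x i j = x j := swapAt_ne (by omega) (by omega)
  constructor
  · rintro ⟨hmem, hmin⟩
    rw [mem_RPDset'] at hmem
    have hxi : x i < x j := by
      have := hmem.2.2; rwa [swapAt_succ, hyj] at this
    have hnoti : ¬ x (i + 1) < x j := by
      intro hcon
      have h1 : i ∈ RPDset m (swapAt x i) j := mem_RPDset'.2
        ⟨hj, by omega, by rw [swapAt_self, hyj]; exact hcon⟩
      have := hmin _ h1; omega
    have hxij : x j < x (i + 1) := lt_of_le_of_ne (not_lt.1 hnoti) hne
    refine ⟨⟨mem_RPDset'.2 ⟨hj, by omega, hxi⟩, fun l hl => ?_⟩, hxij⟩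
    rw [mem_RPDset'] at hl
    by_contra hcon
    push_neg at hcon
    have h1 : l ∈ RPDset m (swapAt x i) j := mem_RPDset'.2
      ⟨hl.1, hl.2.1, by rw [swapAt_ne (by omega) (by omega), hyj]; exact hl.2.2⟩
    have := hmin _ h1; omega
  · rintro ⟨⟨hmem, hmin⟩, hxij⟩
    rw [mem_RPDset'] at hmem
    refine ⟨mem_RPDset'.2 ⟨by omega, him, by rw [swapAt_succ, hyj]; exact hmem.2.2⟩,
      fun l hl => ?_⟩
    rw [mem_RPDset'] at hl
    by_contra hcon
    push_neg at hcon
    rcases eq_or_ne l i with hli | hli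
    · have h2 := hl.2.2
      rw [hli, swapAt_self, hyj] at h2
      exact absurd hxij (not_lt.2 h2.le)
    · have h1 : l ∈ RPDset m x j := mem_RPDset'.2
        ⟨hl.1, hl.2.1, by
          have := hl.2.2
          rwa [swapAt_ne hli (by omega), hyj] at this⟩
      have := hmin _ h1; omega

end Swap

theorem stmt17 (m i : ℕ) (x : ℕ → ℤ) (hx : Set.InjOn x (Set.Icc 1 m))
    (hi1 : 1 ≤ i) (him : i + 1 ≤ m) (hlt : x i < x (i + 1)) :
    SN m (swapAt x i) i ≤ SN m x i ∧
    SN m (swapAt x i) (i + 1) = SN m x i - SN m (swapAt x i) i + 1 ∧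
    ∀ r : ℕ, refD m x (i + 1) = (r : ℤ) →
      SN m (swapAt x i) r = SN m x r - 1 := by
  have hxne : ∀ a b : ℕ, 1 ≤ a → a ≤ m → 1 ≤ b → b ≤ m → a ≠ b → x a ≠ x b := by
    intro a b ha1 ham hb1 hbm hab h
    exact hab (hx (Set.mem_Icc.2 ⟨ha1, ham⟩) (Set.mem_Icc.2 ⟨hb1, hbm⟩) h)
  -- the sets
  set A := (Finset.Ico 1 i).filter (fun j => refD m x j = (i : ℤ)) with hA
  set S₁ := (Finset.Ico 1 i).filter (fun j => refD m (swapAt x i) j = (i : ℤ)) with hS₁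
  set S₂ := (Finset.Ico 1 i).filter (fun j => refD m (swapAt x i) j = ((i + 1 : ℕ) : ℤ)) with hS₂
  have hS₁A : S₁ = A.filter (fun j => x (i + 1) < x j) := by
    rw [hS₁, hA, Finset.filter_filter]
    apply Finset.filter_congr
    intro j hj
    rw [Finset.mem_Ico] at hj
    exact refD_swap_eq_i hj.2 hj.1 him hlt
      (hxne j (i + 1) hj.1 (by omega) (by omega) him (by omega))
  have hS₂A : S₂ = A.filter (fun j => x j < x (i + 1)) := by
    rw [hS₂, hA, Finset.filter_filter]
    apply Finset.filter_congr
    intro j hj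
    rw [Finset.mem_Ico] at hj
    exact refD_swap_eq_succ hj.2 hj.1 him hlt
      (hxne j (i + 1) hj.1 (by omega) (by omega) him (by omega))
  have hsplit : S₁.card + S₂.card = A.card := by
    rw [hS₁A, hS₂A]
    have : A.filter (fun j => x j < x (i + 1)) =
        A.filter (fun j => ¬ x (i + 1) < x j) := by
      apply Finset.filter_congr
      intro j hj
      rw [hA, Finset.mem_filter, Finset.mem_Ico] at hj
      have := hxne j (i + 1) hj.1.1 (by omega) (by omega) him (by omega)
      constructor
      · intro h; exact not_lt.2 h.le
      · intro h; exact lt_of_le_of_ne (not_lt.1 h) this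
    rw [this]
    exact Finset.card_filter_add_card_filter_not _
  have hSN1 : SN m (swapAt x i) i = S₁.card := rfl
  have hSNx : SN m x i = A.card := rfl
  have hle : SN m (swapAt x i) i ≤ SN m x i := by
    rw [hSN1, hSNx, hS₁A]
    exact Finset.card_le_card (Finset.filter_subset _ _)
  have hIco : Finset.Ico 1 (i + 1) = insert i (Finset.Ico 1 i) := by
    ext k
    simp only [Finset.mem_Ico, Finset.mem_insert]
    omega
  have hSN2 : SN m (swapAt x i) (i + 1) = S₂.card + 1 := by
    unfold SN
    rw [hIco, Finset.filter_insert, if_pos (refD_swap_at him hlt)]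
    rw [Finset.card_insert_of_notMem (fun hc => by
      have := Finset.mem_of_mem_filter _ hc
      rw [Finset.mem_Ico] at this; omega)]
  refine ⟨hle, ?_, ?_⟩
  · rw [hSN2, hSNx, hSN1]; omega
  · intro r hr
    obtain ⟨hrmem, hrmin⟩ := refD_eq_coe.1 hr
    rw [mem_RPDset'] at hrmem
    obtain ⟨hri, hrm, hrlt⟩ := hrmem
    have hxri : x r ≠ x i := hxne r i (by omega) hrm hi1 (by omega) (by omega)
    -- refD_x i = r ↔ x r < x i
    have F5 : refD m x i = (r : ℤ) ↔ x r < x i := by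
      rw [refD_eq_coe]
      constructor
      · rintro ⟨hmem, -⟩
        exact (mem_RPDset'.1 hmem).2.2
      · intro hT
        refine ⟨mem_RPDset'.2 ⟨by omega, hrm, hT⟩, fun l hl => ?_⟩
        rw [mem_RPDset'] at hl
        have hli1 : l ≠ i + 1 := by
          intro hcon; rw [hcon] at hl; exact absurd hl.2.2 (not_lt.2 hlt.le)
        exact hrmin l (mem_RPDset'.2 ⟨by omega, hl.2.1, lt_trans hl.2.2 hlt⟩)
    -- refD_y (i+1) = r ↔ x r < x i
    have F4 : refD m (swapAt x i) (i + 1) = (r : ℤ) ↔ x r < x i := by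
      rw [refD_eq_coe]
      constructor
      · rintro ⟨hmem, -⟩
        have := (mem_RPDset'.1 hmem).2.2
        rwa [swapAt_ne (show r ≠ i by omega) (show r ≠ i + 1 by omega), swapAt_succ]
          at this
      · intro hT
        refine ⟨mem_RPDset'.2 ⟨by omega, hrm, by
          rw [swapAt_ne (show r ≠ i by omega) (show r ≠ i + 1 by omega), swapAt_succ]
          exact hT⟩, fun l hl => ?_⟩
        rw [mem_RPDset'] at hl
        have hlv := hl.2.2
        rw [swapAt_ne (show l ≠ i by omega) (show l ≠ i + 1 by omega), swapAt_succ]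
          at hlv
        exact hrmin l (mem_RPDset'.2 ⟨hl.1, hl.2.1, lt_trans hlv hlt⟩)
    have hyine : refD m (swapAt x i) i ≠ (r : ℤ) := by
      rw [refD_swap_at him hlt]
      intro hcon
      have : i + 1 = r := by exact_mod_cast hcon
      omega
    rcases lt_or_gt_of_ne hxri with hT | hT
    · -- x r < x i : positions i and i+1 both counted before, only i+1 after
      have key : ∀ j, 1 ≤ j → j < r →
          (refD m (swapAt x i) j = (r : ℤ) ↔ (j ≠ i ∧ refD m x j = (r : ℤ))) := by
        intro j hj1 hjr
        rcases lt_trichotomy j i with hji | rfl | hji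
        · rw [refD_swap_small hji hri him hlt]
          simp only [iff_and_self]
          intro _; omega
        · simp only [hyine, false_iff, not_and]
          intro hc; omega
        · rcases eq_or_lt_of_le (show i + 1 ≤ j by omega) with rfl | hji'
          · rw [F4]
            simp only [hT, true_iff]
            exact ⟨by omega, hr⟩
          · rw [refD_swap_gt hji']
            simp only [iff_and_self]
            intro _; omega
      have hset : (Finset.Ico 1 r).filter (fun j => refD m (swapAt x i) j = (r : ℤ)) =
          ((Finset.Ico 1 r).filter (fun j => refD m x j = (r : ℤ))).erase i := by
        ext j
        simp only [Finset.mem_erase, Finset.mem_filter, Finset.mem_Ico]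
        constructor
        · rintro ⟨⟨h1, h2⟩, hQ⟩
          obtain ⟨hne, hP⟩ := (key j h1 h2).1 hQ
          exact ⟨hne, ⟨h1, h2⟩, hP⟩
        · rintro ⟨hne, ⟨h1, h2⟩, hP⟩
          exact ⟨⟨h1, h2⟩, (key j h1 h2).2 ⟨hne, hP⟩⟩
      have himem : i ∈ (Finset.Ico 1 r).filter (fun j => refD m x j = (r : ℤ)) := by
        rw [Finset.mem_filter, Finset.mem_Ico]
        exact ⟨⟨hi1, by omega⟩, F5.2 hT⟩
      show ((Finset.Ico 1 r).filter (fun j => refD m (swapAt x i) j = (r : ℤ))).card = SN m x r - 1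
      rw [hset, Finset.card_erase_of_mem himem]
      rfl
    · -- x i < x r : position i+1 counted before, nothing changes after except it
      have key : ∀ j, 1 ≤ j → j < r →
          (refD m (swapAt x i) j = (r : ℤ) ↔ (j ≠ i + 1 ∧ refD m x j = (r : ℤ))) := by
        intro j hj1 hjr
        rcases lt_trichotomy j i with hji | rfl | hji
        · rw [refD_swap_small hji hri him hlt]
          simp only [iff_and_self]
          intro _; omega
        · simp only [hyine, false_iff, not_and]
          intro _
          rw [F5]
          exact not_lt.2 hT.le
        · rcases eq_or_lt_of_le (show i + 1 ≤ j by omega) with rfl | hji'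
          · rw [F4]
            simp only [not_lt.2 hT.le, false_iff, not_and]
            intro hc; omega
          · rw [refD_swap_gt hji']
            simp only [iff_and_self]
            intro _; omega
      have hset : (Finset.Ico 1 r).filter (fun j => refD m (swapAt x i) j = (r : ℤ)) =
          ((Finset.Ico 1 r).filter (fun j => refD m x j = (r : ℤ))).erase (i + 1) := by
        ext j
        simp only [Finset.mem_erase, Finset.mem_filter, Finset.mem_Ico]
        constructor
        · rintro ⟨⟨h1, h2⟩, hQ⟩
          obtain ⟨hne, hP⟩ := (key j h1 h2).1 hQ
          exact ⟨hne, ⟨h1, h2⟩, hP⟩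
        · rintro ⟨hne, ⟨h1, h2⟩, hP⟩
          exact ⟨⟨h1, h2⟩, (key j h1 h2).2 ⟨hne, hP⟩⟩
      have himem : i + 1 ∈ (Finset.Ico 1 r).filter (fun j => refD m x j = (r : ℤ)) := by
        rw [Finset.mem_filter, Finset.mem_Ico]
        exact ⟨⟨by omega, by omega⟩, hr⟩
      show ((Finset.Ico 1 r).filter (fun j => refD m (swapAt x i) j = (r : ℤ))).card = SN m x r - 1
      rw [hset, Finset.card_erase_of_mem himem]
      rfl
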